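/- Let $(X_n : n \in \omega)$ be a sequentially absorbing covering of a sequential topological space $X$ by closed perfectly normal subspaces $X_n$. Then $X$ is perfectly normal; in particular, for every closed set $F \subseteq X$ there is a continuous function $f : X \to [0,\infty)$ with $F = f^{-1}(0)$. -/

import Mathlib

open Filter Topology Set

/-- In a perfectly normal space every closed set is a zero set. -/
lemma zero_set_of_closed' {Y : Type*} [TopologicalSpace Y] [PerfectlyNormalSpace Y]
    {F : Set Y} (hF : IsClosed F) :
    ∃ f : Y → ℝ, Continuous f ∧ (∀ x, 0 ≤ f x) ∧ F = f ⁻¹' {0} := by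
  obtain ⟨U, hUopen, hUeq⟩ := (PerfectlyNormalSpace.closed_gdelta hF).eq_iInter_nat
  have hsub : ∀ n, F ⊆ U n := fun n => hUeq ▸ iInter_subset U n
  have hdis : ∀ n, Disjoint F (U n)ᶜ := fun n =>
    disjoint_compl_right_iff_subset.mpr (hsub n)
  choose fn hfn0 hfn1 hfn01 using fun n =>
    exists_continuous_zero_one_of_isClosed hF (hUopen n).isClosed_compl (hdis n)
  have hnn' : ∀ n x, (0:ℝ) ≤ fn n x := fun n x => (hfn01 n x).1
  have hle1 : ∀ n x, fn n x ≤ 1 := fun n x => (hfn01 n x).2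
  have hb : ∀ n x, ‖(1/2:ℝ)^n * fn n x‖ ≤ (1/2:ℝ)^n := by
    intro n x
    rw [norm_mul, Real.norm_eq_abs, Real.norm_eq_abs, abs_of_nonneg (by positivity),
      abs_of_nonneg (hnn' n x)]
    calc (1/2:ℝ)^n * fn n x ≤ (1/2:ℝ)^n * 1 :=
          mul_le_mul_of_nonneg_left (hle1 n x) (by positivity)
      _ = (1/2:ℝ)^n := mul_one _
  have hcont : Continuous fun x => ∑' n, (1/2:ℝ)^n * fn n x :=
    continuous_tsum (fun n => continuous_const.mul (fn n).continuous)
      summable_geometric_two (fun n x => hb n x)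
  have hsumm : ∀ x, Summable fun n => (1/2:ℝ)^n * fn n x := fun x =>
    Summable.of_norm_bounded summable_geometric_two (fun n => hb n x)
  have hnn : ∀ x, 0 ≤ ∑' n, (1/2:ℝ)^n * fn n x := fun x =>
    tsum_nonneg (fun n => mul_nonneg (by positivity) (hnn' n x))
  refine ⟨_, hcont, hnn, ?_⟩
  ext x
  simp only [mem_preimage, mem_singleton_iff]
  constructor
  · intro hx
    have h0 : ∀ n, fn n x = 0 := fun n => hfn0 n hx
    simp [h0]
  · intro hx
    by_contra hxF
    have hx' : x ∉ ⋂ n, U n := fun h => hxF (hUeq ▸ h)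
    obtain ⟨n, hn⟩ : ∃ n, x ∉ U n := by simpa [mem_iInter] using hx'
    have h1 : fn n x = 1 := hfn1 n hn
    have hle : (1/2:ℝ)^n * fn n x ≤ ∑' m, (1/2:ℝ)^m * fn m x :=
      Summable.le_tsum (hsumm x) n (fun m _ => mul_nonneg (by positivity) (hnn' m x))
    rw [hx, h1, mul_one] at hle
    exact absurd hle (not_le.mpr (by positivity))

lemma continuousOn_union_of_isClosed' {Y : Type*} [TopologicalSpace Y] {f : Y → ℝ}
    {s t : Set Y} (hs : IsClosed s) (ht : IsClosed t)
    (hfs : ContinuousOn f s) (hft : ContinuousOn f t) : ContinuousOn f (s ∪ t) := by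
  rw [continuousOn_iff_isClosed]
  intro C hC
  refine ⟨(s ∩ f ⁻¹' C) ∪ (t ∩ f ⁻¹' C),
    (hfs.preimage_isClosed_of_isClosed hs hC).union
      (hft.preimage_isClosed_of_isClosed ht hC), ?_⟩
  ext x
  simp only [mem_inter_iff, mem_union, mem_preimage]
  tauto

lemma ext_step' {Y : Type*} [TopologicalSpace Y] [PerfectlyNormalSpace Y] {A F : Set Y}
    (hA : IsClosed A) (hF : IsClosed F) (g : Y → ℝ) (hg : ContinuousOn g A)
    (hgnn : ∀ x ∈ A, 0 ≤ g x) (hgz : ∀ x ∈ A, (g x = 0 ↔ x ∈ F)) :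
    ∃ G : Y → ℝ, Continuous G ∧ (∀ x, 0 ≤ G x) ∧ (∀ x ∈ A, G x = g x) ∧
      ∀ x, (G x = 0 ↔ x ∈ F) := by
  classical
  obtain ⟨φ, φcont, φnn, φeq⟩ := zero_set_of_closed' hF
  obtain ⟨ψ, ψcont, ψnn, ψeq⟩ := zero_set_of_closed' (hA.union hF)
  have φz : ∀ y, φ y = 0 ↔ y ∈ F := by
    intro y; rw [φeq]; simp [mem_preimage, eq_comm]
  have ψz : ∀ y, ψ y = 0 ↔ y ∈ A ∪ F := by
    intro y; rw [ψeq]; simp [mem_preimage, eq_comm]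
  set q : Y → ℝ := fun y => if y ∈ A then g y else 0 with hqdef
  have hqA : ∀ y ∈ A, q y = g y := fun y hy => if_pos hy
  have hq0 : ∀ y ∈ F, q y = 0 := by
    intro y hy
    by_cases h : y ∈ A
    · simp [hqdef, h, (hgz y h).mpr hy]
    · simp [hqdef, h]
  have hqc : ContinuousOn q (A ∪ F) :=
    continuousOn_union_of_isClosed' hA hF (hg.congr hqA)
      (continuousOn_const.congr hq0)
  have scl : IsClosed (A ∪ F) := hA.union hF
  obtain ⟨h, hh⟩ := ContinuousMap.exists_restrict_eq (Y := ℝ) scl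
    ⟨_, continuousOn_iff_continuous_restrict.mp hqc⟩
  have hhy : ∀ y (hy : y ∈ A ∪ F), h y = q y := by
    intro y hy
    have := DFunLike.congr_fun hh (⟨y, hy⟩ : ↥(A ∪ F))
    simpa using this
  refine ⟨fun y => |h y| + ψ y * φ y,
    (h.continuous.abs).add (ψcont.mul φcont),
    fun y => add_nonneg (abs_nonneg _) (mul_nonneg (ψnn y) (φnn y)), ?_, ?_⟩
  · intro y hy
    have hψ : ψ y = 0 := (ψz y).mpr (Or.inl hy)
    show |h y| + ψ y * φ y = g y
    rw [hψ, zero_mul, add_zero, hhy y (Or.inl hy), hqA y hy,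
      abs_of_nonneg (hgnn y hy)]
  · intro y
    show |h y| + ψ y * φ y = 0 ↔ y ∈ F
    constructor
    · intro hy0
      have h1 : |h y| = 0 ∧ ψ y * φ y = 0 :=
        (add_eq_zero_iff_of_nonneg (abs_nonneg _)
          (mul_nonneg (ψnn y) (φnn y))).mp hy0
      by_cases hyA : y ∈ A
      · have : g y = 0 := by
          have := h1.1
          rw [hhy y (Or.inl hyA), hqA y hyA] at this
          exact abs_eq_zero.mp this
        exact (hgz y hyA).mp this
      · rcases mul_eq_zero.mp h1.2 with hψ | hφ
        · rcases (ψz y).mp hψ with h' | h'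
          · exact absurd h' hyA
          · exact h'
        · exact (φz y).mp hφ
    · intro hyF
      have h0 : h y = 0 := by rw [hhy y (Or.inr hyF)]; exact hq0 y hyF
      rw [h0, abs_zero, (φz y).mpr hyF, mul_zero, add_zero]

theorem seq_absorbing_perfectly_normal_pieces_perfectly_normal
    {X : Type*} [TopologicalSpace X] [SequentialSpace X]
    (Xn : ℕ → Set X)
    (hcover : (⋃ n, Xn n) = Set.univ)
    (hclosed : ∀ n, IsClosed (Xn n))
    (hmono : Monotone Xn)
    (habs : ∀ (u : ℕ → X) (x : X), Tendsto u atTop (𝓝 x) →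
      ∃ k, ∀ n, u n ∈ Xn k)
    (hpn : ∀ n, PerfectlyNormalSpace (Xn n)) :
    PerfectlyNormalSpace X ∧
      ∀ F : Set X, IsClosed F → ∃ f : X → ℝ, Continuous f ∧
        (∀ x, 0 ≤ f x) ∧ F = f ⁻¹' {0} := by
  classical
  have hex : ∀ x : X, ∃ n, x ∈ Xn n := by
    intro x
    have : x ∈ ⋃ n, Xn n := hcover ▸ Set.mem_univ x
    exact Set.mem_iUnion.mp this
  -- a set whose intersections with all Xn are closed is closed
  have hglue : ∀ A : Set X, (∀ n, IsClosed (A ∩ Xn n)) → IsClosed A := by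
    intro A hA
    refine IsSeqClosed.isClosed ?_
    intro u x hu hux
    obtain ⟨k, hk⟩ := habs u x hux
    have hx : x ∈ A ∩ Xn k :=
      (hA k).mem_of_tendsto hux (Filter.Eventually.of_forall fun n => ⟨hu n, hk n⟩)
    exact hx.1
  have key : ∀ F : Set X, IsClosed F → ∃ f : X → ℝ, Continuous f ∧
      (∀ x, 0 ≤ f x) ∧ F = f ⁻¹' {0} := by
    intro F hF
    set P : ℕ → (X → ℝ) → Prop := fun n g =>
      ContinuousOn g (Xn n) ∧ (∀ x ∈ Xn n, 0 ≤ g x) ∧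
        (∀ x ∈ Xn n, (g x = 0 ↔ x ∈ F)) with hP
    -- extension step within one piece
    have lift : ∀ n (A : Set X), IsClosed A → A ⊆ Xn n → ∀ g : X → ℝ, ContinuousOn g A →
        (∀ x ∈ A, 0 ≤ g x) → (∀ x ∈ A, (g x = 0 ↔ x ∈ F)) →
        ∃ g' : X → ℝ, P n g' ∧ ∀ x ∈ A, g' x = g x := by
      intro n A hAcl hAsub g hgc hgnn hgz
      haveI := hpn n
      have hA' : IsClosed (Subtype.val ⁻¹' A : Set ↥(Xn n)) :=
        hAcl.preimage continuous_subtype_val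
      have hF' : IsClosed (Subtype.val ⁻¹' F : Set ↥(Xn n)) :=
        hF.preimage continuous_subtype_val
      have hg' : ContinuousOn (g ∘ Subtype.val) (Subtype.val ⁻¹' A : Set ↥(Xn n)) :=
        hgc.comp continuous_subtype_val.continuousOn (fun z hz => hz)
      obtain ⟨G, Gc, Gnn, GA, Gz⟩ := ext_step' hA' hF' (g ∘ Subtype.val) hg'
        (fun z hz => hgnn z.1 hz) (fun z hz => hgz z.1 hz)
      refine ⟨fun x => if h : x ∈ Xn n then G ⟨x, h⟩ else 0, ⟨?_, ?_, ?_⟩, ?_⟩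
      · rw [continuousOn_iff_continuous_restrict]
        have : (Xn n).restrict (fun x => if h : x ∈ Xn n then G ⟨x, h⟩ else 0) = G := by
          funext z
          simp [Set.restrict, z.2]
        convert Gc using 1
        exact this
      · intro x hx
        simpa [hx] using Gnn ⟨x, hx⟩
      · intro x hx
        have := Gz ⟨x, hx⟩
        simpa [hx] using this
      · intro x hx
        have h : x ∈ Xn n := hAsub hx
        have := GA ⟨x, h⟩ hx
        simpa [h] using this
    have base : ∃ g, P 0 g := by
      obtain ⟨g, hg, -⟩ := lift 0 ∅ isClosed_empty (Set.empty_subset _) 0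
        (continuousOn_empty _) (fun x hx => absurd hx (Set.notMem_empty x))
        (fun x hx => absurd hx (Set.notMem_empty x))
      exact ⟨g, hg⟩
    have step : ∀ n (g : X → ℝ), P n g →
        ∃ g', P (n + 1) g' ∧ ∀ x ∈ Xn n, g' x = g x := by
      intro n g hg
      exact lift (n + 1) (Xn n) (hclosed n) (hmono (Nat.le_succ n)) g hg.1 hg.2.1 hg.2.2
    choose step' hstep1 hstep2 using step
    let gs : (n : ℕ) → {g : X → ℝ // P n g} := fun n =>
      Nat.rec ⟨base.choose, base.choose_spec⟩
        (fun m ih => ⟨step' m ih.1 ih.2, hstep1 m ih.1 ih.2⟩) n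
    have gs_succ : ∀ n, ∀ x ∈ Xn n, (gs (n + 1)).1 x = (gs n).1 x :=
      fun n => hstep2 n (gs n).1 (gs n).2
    have compat : ∀ m n, m ≤ n → ∀ x ∈ Xn m, (gs n).1 x = (gs m).1 x := by
      intro m n h
      induction n, h using Nat.le_induction with
      | base => intro x _; rfl
      | succ n hmn ih =>
        intro x hx
        rw [gs_succ n x (hmono hmn hx), ih x hx]
    set f : X → ℝ := fun x => (gs (Nat.find (hex x))).1 x with hfdef
    have hf_eq : ∀ n, ∀ x ∈ Xn n, f x = (gs n).1 x := by
      intro n x hx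
      have hm : x ∈ Xn (Nat.find (hex x)) := Nat.find_spec (hex x)
      rcases le_total (Nat.find (hex x)) n with h | h
      · rw [hfdef]
        exact (compat _ n h x hm).symm
      · exact compat n _ h x hx
    have hcont : Continuous f := by
      rw [continuous_iff_isClosed]
      intro C hC
      apply hglue
      intro n
      have hcn : ContinuousOn f (Xn n) := ((gs n).2.1).congr (hf_eq n)
      have := hcn.preimage_isClosed_of_isClosed (hclosed n) hC
      rwa [Set.inter_comm]
    refine ⟨f, hcont, ?_, ?_⟩
    · intro x
      rcases hex x with ⟨n, hn⟩
      rw [hf_eq n x hn]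
      exact (gs n).2.2.1 x hn
    · ext x
      rcases hex x with ⟨n, hn⟩
      simp only [Set.mem_preimage, Set.mem_singleton_iff]
      rw [hf_eq n x hn]
      exact ((gs n).2.2.2 x hn).symm
  have hnormal : NormalSpace X := by
    refine ⟨fun s t hs ht hd => ?_⟩
    obtain ⟨fs, hfs, hfsnn, hfseq⟩ := key s hs
    obtain ⟨ft, hft, hftnn, hfteq⟩ := key t ht
    have hzs : ∀ x ∈ s, fs x = 0 := by
      intro x hx; have : x ∈ fs ⁻¹' {0} := hfseq ▸ hx; simpa using this
    have hzt : ∀ x ∈ t, ft x = 0 := by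
      intro x hx; have : x ∈ ft ⁻¹' {0} := hfteq ▸ hx; simpa using this
    refine ⟨{x | fs x < ft x}, {x | ft x < fs x}, isOpen_lt hfs hft, isOpen_lt hft hfs,
      ?_, ?_, ?_⟩
    · intro x hx
      have h1 : fs x = 0 := hzs x hx
      have h2 : ft x ≠ 0 := by
        intro h0
        have : x ∈ ft ⁻¹' {0} := by simpa using h0
        exact (Set.disjoint_left.mp hd hx) (hfteq ▸ this)
      have : 0 < ft x := lt_of_le_of_ne (hftnn x) (Ne.symm h2)
      simpa [h1] using this
    · intro x hx
      have h1 : ft x = 0 := hzt x hx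
      have h2 : fs x ≠ 0 := by
        intro h0
        have : x ∈ fs ⁻¹' {0} := by simpa using h0
        exact (Set.disjoint_right.mp hd hx) (hfseq ▸ this)
      have : 0 < fs x := lt_of_le_of_ne (hfsnn x) (Ne.symm h2)
      simpa [h1] using this
    · rw [Set.disjoint_left]
      intro x hx hx'
      simp only [Set.mem_setOf_eq] at hx hx'
      exact lt_asymm hx hx'
  refine ⟨{ toNormalSpace := hnormal, closed_gdelta := ?_ }, key⟩
  intro F hF
  obtain ⟨f, hf, hfnn, hfeq⟩ := key F hF
  have : F = ⋂ n : ℕ, {x | f x < 1 / ((n : ℝ) + 1)} := by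
    ext x
    simp only [Set.mem_iInter, Set.mem_setOf_eq]
    constructor
    · intro hx n
      have : f x = 0 := by have : x ∈ f ⁻¹' {0} := hfeq ▸ hx; simpa using this
      rw [this]
      positivity
    · intro hx
      have hle : f x ≤ 0 :=
        ge_of_tendsto' tendsto_one_div_add_atTop_nhds_zero_nat (fun n => (hx n).le)
      have : f x = 0 := le_antisymm hle (hfnn x)
      have : x ∈ f ⁻¹' {0} := by simpa using this
      exact hfeq ▸ this
  rw [this]
  exact IsGδ.iInter_of_isOpen fun n => isOpen_lt hf continuous_const
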